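/- Consider an ε-corruption setup with parameters n, d, ε and C > 0. Assume the fourth-moment bounds: for every u ∈ ℝ^d, (1/n) Σ_i ⟨u, x_i − μ⟩^4 ≤ (2C)^2 · Q(u)^2 and (1/n) Σ_i ⟨u, x*_i − μ*⟩^4 ≤ (2C)^2 · Q*(u)^2, and assume 16·C^2·ε ≤ 1/4. Then for every u ∈ ℝ^d, Q(u)^2 ≤ 5 · Q*(u)^2. -/

import Mathlib

open Finset

private lemma stmt5_aux (X Y Z : ℝ) (hX : 0 < X) (hY : 0 ≤ Y) (hZ0 : 0 ≤ Z)
    (h1 : X ≤ Y + (8/7) * Z) (h2 : Z ^ 2 ≤ (1/8) * X ^ 2) : X ^ 2 ≤ 5 * Y ^ 2 := by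
  have hZle : Z ≤ (9/25) * X := by nlinarith [mul_pos hX hX]
  have hXY : X ≤ 2 * Y := by linarith
  nlinarith [sq_nonneg Y, hX.le]

private lemma stmt5_aux2 (n q r : ℝ) (hn : 0 < n) (h : (n * q) ^ 2 ≤ 5 * (n * r) ^ 2) :
    q ^ 2 ≤ 5 * r ^ 2 := by
  nlinarith [mul_pos hn hn]

set_option maxHeartbeats 1000000 in
open Classical in
/-- In an ε-corruption setup with fourth-moment bounds and `16 C² ε ≤ 1/4`,
the corrupted quadratic form is dominated: `Q u² ≤ 5 Q* u²`. -/
theorem stmt_5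
    (n d : ℕ) (hn : 0 < n) (hd : 0 < d) (ε C : ℝ) (hC : 0 < C)
    (xstar y x : Fin n → EuclideanSpace ℝ (Fin d)) (w : Fin n → ℝ)
    (hw01 : ∀ i, w i = 0 ∨ w i = 1)
    (hwsum : (1 - ε) * n ≤ ∑ i, w i)
    (hwxy : ∀ i, w i • (y i - x i) = 0)
    (hcorr : ((Finset.univ.filter fun i => y i ≠ xstar i).card : ℝ) ≤ ε * n)
    (μ μstar : EuclideanSpace ℝ (Fin d))
    (hμ : μ = (n : ℝ)⁻¹ • ∑ i, x i)
    (hμstar : μstar = (n : ℝ)⁻¹ • ∑ i, xstar i)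
    (Q Qstar : EuclideanSpace ℝ (Fin d) → ℝ)
    (hQ : ∀ u, Q u = (n : ℝ)⁻¹ * ∑ i, (inner ℝ u (x i - μ) : ℝ) ^ 2)
    (hQstar : ∀ u, Qstar u = (n : ℝ)⁻¹ * ∑ i, (inner ℝ u (xstar i - μstar) : ℝ) ^ 2)
    (h4 : ∀ u, (n : ℝ)⁻¹ * ∑ i, (inner ℝ u (x i - μ) : ℝ) ^ 4 ≤ (2 * C) ^ 2 * (Q u) ^ 2)
    (h4star : ∀ u, (n : ℝ)⁻¹ * ∑ i, (inner ℝ u (xstar i - μstar) : ℝ) ^ 4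
      ≤ (2 * C) ^ 2 * (Qstar u) ^ 2)
    (hsmall : 16 * C ^ 2 * ε ≤ 1 / 4) :
    ∀ u : EuclideanSpace ℝ (Fin d),
      (Q u) ^ 2 ≤ 5 * (Qstar u) ^ 2 := by
  intro u
  have hn' : (0:ℝ) < n := by exact_mod_cast hn
  set a : Fin n → ℝ := fun i => (inner ℝ u (x i - μ) : ℝ) with ha
  set b : Fin n → ℝ := fun i => (inner ℝ u (xstar i - μstar) : ℝ) with hb
  set t : ℝ := (inner ℝ u (μ - μstar) : ℝ) with ht
  have hQ0 : 0 ≤ Q u := by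
    rw [hQ]; positivity
  have hQs0 : 0 ≤ Qstar u := by
    rw [hQstar]; positivity
  rcases eq_or_lt_of_le hQ0 with h0 | hQpos
  · nlinarith [sq_nonneg (Qstar u)]
  -- sums of squares
  have hsum_a2 : ∑ i, a i ^ 2 = n * Q u := by
    rw [hQ u, ← mul_assoc, mul_inv_cancel₀ hn'.ne', one_mul]
  have hsum_b2 : ∑ i, b i ^ 2 = n * Qstar u := by
    rw [hQstar u, ← mul_assoc, mul_inv_cancel₀ hn'.ne', one_mul]
  have hsum_a4 : ∑ i, a i ^ 4 ≤ n * (4 * C ^ 2 * Q u ^ 2) := by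
    have e : (n:ℝ)⁻¹ * ∑ i, a i ^ 4 ≤ (2 * C) ^ 2 * Q u ^ 2 := h4 u
    rw [inv_mul_le_iff₀ hn'] at e
    nlinarith [e]
  -- sum of a is zero
  have hsum_a : ∑ i, a i = 0 := by
    have h1 : ∑ i, a i = (∑ i, (inner ℝ u (x i) : ℝ)) - n * (inner ℝ u μ : ℝ) := by
      simp only [ha, inner_sub_right, Finset.sum_sub_distrib, Finset.sum_const,
        Finset.card_univ, Fintype.card_fin, nsmul_eq_mul]
    have h2 : (inner ℝ u μ : ℝ) = (n:ℝ)⁻¹ * ∑ i, (inner ℝ u (x i) : ℝ) := by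
      rw [hμ, real_inner_smul_right, inner_sum]
    rw [h1, h2, ← mul_assoc, mul_inv_cancel₀ hn'.ne', one_mul, sub_self]
  -- pointwise identity : a i + t = ⟨u, x i - μstar⟩
  have hat : ∀ i, a i + t = (inner ℝ u (x i - μstar) : ℝ) := by
    intro i
    simp only [ha, ht, inner_sub_right]
    ring
  -- 1 ≤ 4 C^2
  have hC2 : 1 ≤ 4 * C ^ 2 := by
    have hcs := sq_sum_le_card_mul_sum_sq (s := (univ : Finset (Fin n))) (f := fun i => a i ^ 2)
    simp only [Finset.card_univ, Fintype.card_fin] at hcs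
    have h1 : (∑ i, (a i ^ 2) ^ 2) ≤ ∑ i, a i ^ 4 := by
      apply le_of_eq; apply Finset.sum_congr rfl; intro i _; ring
    have h2 : ((n:ℝ) * Q u) ^ 2 ≤ (n:ℝ) * ((n:ℝ) * (4 * C ^ 2 * Q u ^ 2)) := by
      calc ((n:ℝ) * Q u) ^ 2 = (∑ i, a i ^ 2) ^ 2 := by rw [hsum_a2]
        _ ≤ (n:ℝ) * ∑ i, (a i ^ 2) ^ 2 := hcs
        _ ≤ (n:ℝ) * ∑ i, a i ^ 4 := mul_le_mul_of_nonneg_left h1 hn'.le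
        _ ≤ (n:ℝ) * ((n:ℝ) * (4 * C ^ 2 * Q u ^ 2)) := by
            exact mul_le_mul_of_nonneg_left hsum_a4 hn'.le
    nlinarith [h2, mul_pos (mul_pos hn' hn') (mul_pos hQpos hQpos)]
  have hε0 : 0 ≤ ε := by
    have h1 : (0:ℝ) ≤ ((Finset.univ.filter fun i => y i ≠ xstar i).card : ℝ) := Nat.cast_nonneg _
    nlinarith
  have hε16 : ε ≤ 1 / 16 := by nlinarith
  -- the bad set
  set B : Finset (Fin n) := univ.filter (fun i => ¬ x i = xstar i) with hB
  -- cardinality bound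
  have hcard1 : ((univ.filter fun i => ¬ w i = 1).card : ℝ) ≤ ε * n := by
    have hsum_split : ∑ i, w i = ((univ.filter fun i => w i = 1).card : ℝ) := by
      rw [← Finset.sum_filter_add_sum_filter_not univ (fun i => w i = 1) w]
      have h1 : ∑ i ∈ univ.filter (fun i => w i = 1), w i
          = ((univ.filter fun i => w i = 1).card : ℝ) := by
        rw [Finset.sum_congr rfl (fun i hi => (Finset.mem_filter.mp hi).2)]
        simp
      have h2 : ∑ i ∈ univ.filter (fun i => ¬ w i = 1), w i = 0 := by
        apply Finset.sum_eq_zero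
        intro i hi
        rcases hw01 i with h | h
        · exact h
        · exact absurd h (Finset.mem_filter.mp hi).2
      rw [h1, h2, add_zero]
    have hcards : ((univ.filter fun i => w i = 1).card : ℝ)
        + ((univ.filter fun i => ¬ w i = 1).card : ℝ) = n := by
      have := Finset.card_filter_add_card_filter_not
        (s := (univ : Finset (Fin n))) (p := fun i => w i = 1)
      simp only [Finset.card_univ, Fintype.card_fin] at this
      exact_mod_cast this
    nlinarith [hwsum, hsum_split, hcards]
  have hmB : (B.card : ℝ) ≤ 2 * ε * n := by
    have hsub : B ⊆ (univ.filter fun i => ¬ w i = 1) ∪ (univ.filter fun i => y i ≠ xstar i) := by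
      intro i hi
      have hxi : ¬ x i = xstar i := (Finset.mem_filter.mp hi).2
      rw [Finset.mem_union, Finset.mem_filter, Finset.mem_filter]
      by_contra hcon
      push_neg at hcon
      have hw1 : w i = 1 := hcon.1 (Finset.mem_univ i)
      have hyx : y i = xstar i := hcon.2 (Finset.mem_univ i)
      have := hwxy i
      rw [hw1, one_smul, sub_eq_zero] at this
      exact hxi (by rw [← this, hyx])
    have h1 : (B.card : ℝ) ≤ ((univ.filter fun i => ¬ w i = 1).card : ℝ)
        + ((univ.filter fun i => y i ≠ xstar i).card : ℝ) := by
      have := le_trans (Finset.card_le_card hsub) (Finset.card_union_le _ _)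
      exact_mod_cast this
    nlinarith [hcard1, hcorr]
  have hmB' : (B.card : ℝ) ≤ n / 8 := by nlinarith
  -- main decomposition
  have hmain : n * Q u + n * t ^ 2 ≤ n * Qstar u
      + (∑ i ∈ B, a i ^ 2) + 2 * t * (∑ i ∈ B, a i) + (B.card : ℝ) * t ^ 2 := by
    have hexp : ∑ i, (a i + t) ^ 2 = n * Q u + n * t ^ 2 := by
      have : ∀ i, (a i + t) ^ 2 = a i ^ 2 + 2 * t * a i + t ^ 2 := fun i => by ring
      rw [Finset.sum_congr rfl (fun i _ => this i), Finset.sum_add_distrib,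
        Finset.sum_add_distrib, ← Finset.mul_sum, hsum_a, hsum_a2]
      simp only [Finset.sum_const, Finset.card_univ, Fintype.card_fin, nsmul_eq_mul,
        mul_zero, add_zero]
    have hsplit : ∑ i, (a i + t) ^ 2
        = ∑ i ∈ univ.filter (fun i => x i = xstar i), (a i + t) ^ 2
          + ∑ i ∈ B, (a i + t) ^ 2 := by
      rw [hB]
      exact (Finset.sum_filter_add_sum_filter_not univ (fun i => x i = xstar i) _).symm
    have hgood : ∑ i ∈ univ.filter (fun i => x i = xstar i), (a i + t) ^ 2 ≤ n * Qstar u := by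
      have h1 : ∀ i ∈ univ.filter (fun i => x i = xstar i), (a i + t) ^ 2 = b i ^ 2 := by
        intro i hi
        have hxi : x i = xstar i := (Finset.mem_filter.mp hi).2
        rw [hat i, hxi]
      rw [Finset.sum_congr rfl h1]
      rw [← hsum_b2]
      exact Finset.sum_le_sum_of_subset_of_nonneg (Finset.filter_subset _ _)
        (fun i _ _ => sq_nonneg _)
    have hbad : ∑ i ∈ B, (a i + t) ^ 2
        = (∑ i ∈ B, a i ^ 2) + 2 * t * (∑ i ∈ B, a i) + (B.card : ℝ) * t ^ 2 := by
      have : ∀ i, (a i + t) ^ 2 = a i ^ 2 + 2 * t * a i + t ^ 2 := fun i => by ring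
      rw [Finset.sum_congr rfl (fun i _ => this i), Finset.sum_add_distrib,
        Finset.sum_add_distrib, ← Finset.mul_sum, Finset.sum_const, nsmul_eq_mul]
    nlinarith [hexp, hsplit, hgood, hbad]
  -- abbreviations
  set Z : ℝ := ∑ i ∈ B, a i ^ 2 with hZ
  set S : ℝ := ∑ i ∈ B, a i with hS
  have hZ0 : 0 ≤ Z := Finset.sum_nonneg (fun i _ => sq_nonneg _)
  -- Cauchy-Schwarz : S² ≤ |B| Z
  have hCS1 : S ^ 2 ≤ (B.card : ℝ) * Z := by
    have := sq_sum_le_card_mul_sum_sq (s := B) (f := a)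
    exact_mod_cast this
  -- Cauchy-Schwarz : Z² ≤ |B| Σ_B a⁴
  have hCS2 : Z ^ 2 ≤ (B.card : ℝ) * ∑ i ∈ B, a i ^ 4 := by
    have h1 := sq_sum_le_card_mul_sum_sq (s := B) (f := fun i => a i ^ 2)
    have h2 : ∑ i ∈ B, (a i ^ 2) ^ 2 = ∑ i ∈ B, a i ^ 4 := by
      apply Finset.sum_congr rfl; intro i _; ring
    rw [h2] at h1
    exact_mod_cast h1
  have hB4 : ∑ i ∈ B, a i ^ 4 ≤ n * (4 * C ^ 2 * Q u ^ 2) := by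
    refine le_trans ?_ hsum_a4
    exact Finset.sum_le_sum_of_subset_of_nonneg (Finset.filter_subset _ _)
      (fun i _ _ => by positivity)
  -- Z² ≤ (1/8) (nQ)²
  have hZbound : Z ^ 2 ≤ (1/8) * (n * Q u) ^ 2 := by
    have hs4 : (0:ℝ) ≤ ∑ i ∈ B, a i ^ 4 :=
      Finset.sum_nonneg (fun i _ => by positivity)
    have hm0 : (0:ℝ) ≤ (B.card : ℝ) := Nat.cast_nonneg _
    have hQQ : (0:ℝ) ≤ (n:ℝ) * (4 * C ^ 2 * Q u ^ 2) := by positivity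
    have h1 : Z ^ 2 ≤ (2 * ε * n) * (n * (4 * C ^ 2 * Q u ^ 2)) := by
      calc Z ^ 2 ≤ (B.card : ℝ) * ∑ i ∈ B, a i ^ 4 := hCS2
        _ ≤ (B.card : ℝ) * ((n:ℝ) * (4 * C ^ 2 * Q u ^ 2)) :=
            mul_le_mul_of_nonneg_left hB4 hm0
        _ ≤ (2 * ε * n) * ((n:ℝ) * (4 * C ^ 2 * Q u ^ 2)) :=
            mul_le_mul_of_nonneg_right hmB hQQ
    nlinarith [sq_nonneg (n * Q u), hn', sq_nonneg (Q u)]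
  clear_value a b t B Z S
  clear hat hsum_a hsum_a2 hsum_b2 hsum_a4 hB4 hCS2 hQ hQstar h4 h4star hwxy hw01 hwsum
    hcorr hμ hμstar hcard1 ha hb ht hB hZ hS
  -- completing the square: 2 t S - (n - |B|) t² ≤ 8 S² / (7 n)
  have hcomp : 2 * t * S - ((n:ℝ) - (B.card : ℝ)) * t ^ 2 ≤ 8 * S ^ 2 / (7 * n) := by
    have hK : (7:ℝ) * n / 8 ≤ (n:ℝ) - (B.card : ℝ) := by linarith [hmB']
    have hKpos : (0:ℝ) < 7 * n / 8 := by linarith [hn']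
    have h1 : 2 * t * S - (7 * (n:ℝ) / 8) * t ^ 2 ≤ S ^ 2 / (7 * (n:ℝ) / 8) := by
      rw [le_div_iff₀ hKpos]
      nlinarith [sq_nonneg (7 * (n:ℝ) / 8 * t - S)]
    have h2 : S ^ 2 / (7 * (n:ℝ) / 8) = 8 * S ^ 2 / (7 * n) := by
      rw [div_eq_div_iff hKpos.ne' (by positivity : (0:ℝ) < 7 * n).ne']
      ring
    have h3 : (7 * (n:ℝ) / 8) * t ^ 2 ≤ ((n:ℝ) - (B.card : ℝ)) * t ^ 2 :=
      mul_le_mul_of_nonneg_right hK (sq_nonneg t)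
    linarith [h1, h2.le, h3]
  -- n Q ≤ n Q* + (8/7) Z
  have hfinal1 : n * Q u ≤ n * Qstar u + (8/7) * Z := by
    have h1 : n * Q u ≤ n * Qstar u + Z + (2 * t * S - ((n:ℝ) - (B.card : ℝ)) * t ^ 2) := by
      linarith [hmain]
    have hSZ : S ^ 2 ≤ ((n:ℝ) / 8) * Z :=
      le_trans hCS1 (mul_le_mul_of_nonneg_right hmB' hZ0)
    have h2 : 8 * S ^ 2 / (7 * n) ≤ Z / 7 := by
      rw [div_le_div_iff₀ (by linarith [hn'] : (0:ℝ) < 7 * n) (by norm_num : (0:ℝ) < (7:ℝ))]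
      linarith [mul_le_mul_of_nonneg_left hSZ (by norm_num : (0:ℝ) ≤ 56),
        mul_le_mul_of_nonneg_right hSZ (by norm_num : (0:ℝ) ≤ 7)]
    linarith [h1, hcomp, h2]
  -- conclude
  have hX0 : 0 < (n:ℝ) * Q u := mul_pos hn' hQpos
  have hY0 : 0 ≤ (n:ℝ) * Qstar u := mul_nonneg hn'.le hQs0
  exact stmt5_aux2 (n:ℝ) (Q u) (Qstar u) hn'
    (stmt5_aux ((n:ℝ) * Q u) ((n:ℝ) * Qstar u) Z hX0 hY0 hZ0 hfinal1 hZbound)
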